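/- Let R be a Hermitian trace-one operator on ℂ^N. Then there exist a unitary operator U on ℂ^N and a vector Ψ ∈ ℂ^N ⊗ ℂ^N such that R = U · Tr₂(|Ψ⟩⟨Ψ|), where Tr₂ denotes the partial trace over the second tensor factor, and moreover ‖Ψ‖² = ‖R‖₁ ≥ 1, where ‖R‖₁ = Tr√(R†R) is the trace norm. In particular, if ‖Ψ‖ > 1 for every such purification (equivalently ‖R‖₁ > 1), R is not positive semidefinite. -/

import Mathlib

open Matrix
open scoped ComplexOrder

/-- `|R| = √(Rᴴ R)`, the positive semidefinite absolute value of a matrix. -/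
noncomputable def absM {n : ℕ} (R : Matrix (Fin n) (Fin n) ℂ) :
    Matrix (Fin n) (Fin n) ℂ :=
  ((Matrix.posSemidef_conjTranspose_mul_self R).1.eigenvectorUnitary : Matrix (Fin n) (Fin n) ℂ) *
    diagonal ((RCLike.ofReal : ℝ → ℂ) ∘ Real.sqrt ∘ (Matrix.posSemidef_conjTranspose_mul_self R).1.eigenvalues) *
    (star (Matrix.posSemidef_conjTranspose_mul_self R).1.eigenvectorUnitary : Matrix (Fin n) (Fin n) ℂ)

/-- Partial trace over the second tensor factor of `ℂ^N ⊗ ℂ^N`. -/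
noncomputable def ptr₂ {N : ℕ}
    (M : Matrix (Fin N × Fin N) (Fin N × Fin N) ℂ) :
    Matrix (Fin N) (Fin N) ℂ :=
  fun a a' => ∑ b, M (a, b) (a', b)

lemma absM_psd_sq {n : ℕ} (R : Matrix (Fin n) (Fin n) ℂ) :
    (absM R).PosSemidef ∧ absM R * absM R = Rᴴ * R := by
  set X := (Matrix.posSemidef_conjTranspose_mul_self R) with hX
  set W : Matrix (Fin n) (Fin n) ℂ := (X.1.eigenvectorUnitary : Matrix (Fin n) (Fin n) ℂ) with hW
  have hWsW : star W * W = 1 := (Matrix.mem_unitaryGroup_iff').mp X.1.eigenvectorUnitary.2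
  refine ⟨?_, ?_⟩
  · unfold absM
    apply Matrix.PosSemidef.mul_mul_conjTranspose_same
    exact Matrix.posSemidef_diagonal_iff.mpr fun i => by
      simp [Complex.zero_le_real, Real.sqrt_nonneg]
  · unfold absM
    change W * diagonal (RCLike.ofReal ∘ Real.sqrt ∘ X.1.eigenvalues) * star W *
      (W * diagonal (RCLike.ofReal ∘ Real.sqrt ∘ X.1.eigenvalues) * star W) = _
    conv_rhs => rw [X.1.spectral_theorem]
    change _ = W * diagonal (RCLike.ofReal ∘ X.1.eigenvalues) * star W
    simp only [Matrix.mul_assoc]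
    rw [← Matrix.mul_assoc (star W) W, hWsW, one_mul, ← Matrix.mul_assoc (diagonal _) (diagonal _),
      diagonal_mul_diagonal]
    congr 3
    funext i
    simp only [Function.comp_apply, RCLike.ofReal, ← Complex.ofReal_mul]
    exact_mod_cast congrArg Complex.ofReal (Real.mul_self_sqrt (X.eigenvalues_nonneg i))

open scoped MatrixOrder in
lemma psd_sq_unique {N : ℕ} {A B M : Matrix (Fin N) (Fin N) ℂ} (hA : A.PosSemidef)
    (hB : B.PosSemidef) (hAM : A * A = M) (hBM : B * B = M) : A = B := by
  have h1 := CFC.sqrt_unique hAM hA.nonneg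
  have h2 := CFC.sqrt_unique hBM hB.nonneg
  rw [← h1, h2]

/-- space-time purification: every Hermitian trace-one `R` on
`ℂ^N` can be written as `R = U · Tr₂(|Ψ⟩⟨Ψ|)` for a unitary `U` and a vector
`Ψ ∈ ℂ^N ⊗ ℂ^N` with `‖Ψ‖² = ‖R‖₁ = Tr√(RᴴR) ≥ 1`; moreover if
`‖R‖₁ > 1` then `R` is not positive semidefinite. -/
theorem spacetime_purification
    (N : ℕ) (R : Matrix (Fin N) (Fin N) ℂ)
    (hR : R.IsHermitian) (hTr : R.trace = 1) :
    (∃ (U : Matrix (Fin N) (Fin N) ℂ) (_ : U ∈ Matrix.unitaryGroup (Fin N) ℂ)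
        (Ψ : Fin N × Fin N → ℂ),
      R = U * ptr₂ (vecMulVec Ψ (star Ψ)) ∧
      (∑ x, ‖Ψ x‖ ^ 2) = ((absM R).trace).re ∧
      1 ≤ ((absM R).trace).re) ∧
    (1 < ((absM R).trace).re → ¬R.PosSemidef) := by
  set V : Matrix (Fin N) (Fin N) ℂ := (hR.eigenvectorUnitary : Matrix (Fin N) (Fin N) ℂ) with hV
  have hVmem : V ∈ Matrix.unitaryGroup (Fin N) ℂ := hR.eigenvectorUnitary.2
  have hVsV : star V * V = 1 := (Matrix.mem_unitaryGroup_iff').mp hVmem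
  have hVVs : V * star V = 1 := (Matrix.mem_unitaryGroup_iff).mp hVmem
  set lam := hR.eigenvalues with hlam
  -- product of two conjugated diagonals
  have hmul : ∀ d e : Fin N → ℂ,
      (V * diagonal d * star V) * (V * diagonal e * star V)
        = V * diagonal (fun i => d i * e i) * star V := by
    intro d e
    rw [← diagonal_mul_diagonal]
    simp only [Matrix.mul_assoc]
    rw [← Matrix.mul_assoc (star V) V (diagonal e * star V), hVsV, one_mul]
  set A : Matrix (Fin N) (Fin N) ℂ :=
    V * diagonal (fun i => ((|lam i| : ℝ) : ℂ)) * star V with hA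
  have hApsd : A.PosSemidef := by
    apply Matrix.PosSemidef.mul_mul_conjTranspose_same
    exact Matrix.posSemidef_diagonal_iff.mpr fun i => by
      simp [Complex.zero_le_real, abs_nonneg]
  have hspec : R = V * diagonal (fun i => ((lam i : ℝ) : ℂ)) * star V := hR.spectral_theorem
  have hAsq : A ^ 2 = Rᴴ * R := by
    rw [hR.eq, pow_two]
    conv_rhs => rw [hspec]
    rw [hA, hmul, hmul]
    have h4 : (fun i => ((|lam i| : ℝ) : ℂ) * ((|lam i| : ℝ) : ℂ))
        = fun i => ((lam i : ℝ) : ℂ) * ((lam i : ℝ) : ℂ) := by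
      funext i
      exact_mod_cast congrArg Complex.ofReal (abs_mul_abs_self (lam i))
    rw [h4]
  have habs : absM R = A :=
    psd_sq_unique (absM_psd_sq R).1 hApsd (absM_psd_sq R).2 (by rw [← pow_two, hAsq])
  have htrA : A.trace = ∑ i, ((|lam i| : ℝ) : ℂ) := by
    rw [hA, Matrix.trace_mul_cycle, hVsV, one_mul, trace_diagonal]
  have htrRe : ((absM R).trace).re = ∑ i, |lam i| := by
    rw [habs, htrA, ← Complex.ofReal_sum, Complex.ofReal_re]
  have htrR : ∑ i, lam i = 1 := by
    have h1 : R.trace = ∑ i, ((lam i : ℝ) : ℂ) := by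
      conv_lhs => rw [hspec]
      rw [Matrix.trace_mul_cycle, hVsV, one_mul, trace_diagonal]
    rw [hTr] at h1
    exact_mod_cast h1.symm
  have h1le : 1 ≤ ∑ i, |lam i| := by
    calc (1:ℝ) = |∑ i, lam i| := by rw [htrR]; norm_num
    _ ≤ ∑ i, |lam i| := Finset.abs_sum_le_sum_abs _ _
  -- the sign matrix
  set s : Fin N → ℂ := fun i => if lam i < 0 then (-1 : ℂ) else 1 with hs
  have hss : ∀ i, s i * s i = 1 := by
    intro i; by_cases h : lam i < 0 <;> simp [hs, h]
  set U : Matrix (Fin N) (Fin N) ℂ := V * diagonal s * star V with hU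
  have hsstar : star s = s := by
    funext i
    by_cases h : lam i < 0 <;> simp [hs, h]
  have hUstar : star U = U := by
    rw [hU]
    simp only [Matrix.star_eq_conjTranspose, conjTranspose_mul,
      conjTranspose_conjTranspose, diagonal_conjTranspose, hsstar, Matrix.mul_assoc]
  have hUmem : U ∈ Matrix.unitaryGroup (Fin N) ℂ := by
    rw [Matrix.mem_unitaryGroup_iff, hUstar, hU, hmul]
    have h2 : (fun i => s i * s i) = fun _ => (1:ℂ) := funext hss
    rw [h2]
    rw [show (diagonal fun _ => (1:ℂ)) = (1 : Matrix (Fin N) (Fin N) ℂ) from diagonal_one,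
      Matrix.mul_one, hVVs]
  have hUA : U * A = R := by
    rw [hU, hA, hmul]
    have h3 : (fun i => s i * ((|lam i| : ℝ) : ℂ)) = fun i => ((lam i : ℝ) : ℂ) := by
      funext i
      by_cases h : lam i < 0
      · simp only [hs, if_pos h, abs_of_neg h]; push_cast; ring
      · simp only [hs, if_neg h, abs_of_nonneg (not_lt.mp h)]; ring
    rw [h3]
    exact hspec.symm
  -- the purifying vector
  set Ψ : Fin N × Fin N → ℂ := fun p => ((Real.sqrt |lam p.2| : ℝ) : ℂ) * V p.1 p.2 with hΨ
  have hptr : ptr₂ (vecMulVec Ψ (star Ψ)) = A := by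
    funext a a'
    rw [hA]
    show ∑ b, Ψ (a, b) * star (Ψ (a', b)) = _
    rw [Matrix.mul_apply]
    refine Finset.sum_congr rfl fun b _ => ?_
    rw [Matrix.mul_diagonal, Matrix.star_apply, hΨ]
    show ((Real.sqrt |lam b| : ℝ) : ℂ) * V a b
        * star (((Real.sqrt |lam b| : ℝ) : ℂ) * V a' b)
      = V a b * ((|lam b| : ℝ) : ℂ) * star (V a' b)
    rw [star_mul', Complex.star_def, Complex.conj_ofReal]
    have : ((Real.sqrt |lam b| : ℝ) : ℂ) * ((Real.sqrt |lam b| : ℝ) : ℂ)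
        = ((|lam b| : ℝ) : ℂ) := by
      rw [← Complex.ofReal_mul, Real.mul_self_sqrt (abs_nonneg _)]
    calc ((Real.sqrt |lam b| : ℝ) : ℂ) * V a b
          * (((Real.sqrt |lam b| : ℝ) : ℂ) * (starRingEnd ℂ) (V a' b))
        = (((Real.sqrt |lam b| : ℝ) : ℂ) * ((Real.sqrt |lam b| : ℝ) : ℂ))
          * (V a b * (starRingEnd ℂ) (V a' b)) := by ring
      _ = _ := by rw [this]; ring
  have hcol : ∀ j, ∑ i, ‖V i j‖ ^ 2 = 1 := by
    intro j
    have h1 : (star V * V) j j = 1 := by rw [hVsV]; simp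
    rw [Matrix.mul_apply] at h1
    have h2 : ∑ i, (star V) j i * V i j = ∑ i, ((‖V i j‖ ^ 2 : ℝ) : ℂ) := by
      refine Finset.sum_congr rfl fun i _ => ?_
      show star (V i j) * V i j = _
      rw [Complex.star_def, ← Complex.normSq_eq_conj_mul_self,
        Complex.normSq_eq_norm_sq]
    rw [h2] at h1
    exact_mod_cast h1
  have hnorm : (∑ x, ‖Ψ x‖ ^ 2) = ((absM R).trace).re := by
    rw [htrRe, Fintype.sum_prod_type]
    rw [Finset.sum_comm]
    refine Finset.sum_congr rfl fun j _ => ?_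
    have : ∀ i, ‖Ψ (i, j)‖ ^ 2 = |lam j| * ‖V i j‖ ^ 2 := by
      intro i
      rw [hΨ]
      simp only [norm_mul, Complex.norm_real, Real.norm_eq_abs,
        abs_of_nonneg (Real.sqrt_nonneg _)]
      rw [mul_pow, Real.sq_sqrt (abs_nonneg _)]
    simp only [this]
    rw [← Finset.mul_sum, hcol j, mul_one]
  refine ⟨⟨U, hUmem, Ψ, ?_, hnorm, htrRe ▸ h1le⟩, ?_⟩
  · rw [hptr, hUA]
  · intro h hpsd
    have hR2 : R = absM R :=
      psd_sq_unique hpsd (absM_psd_sq R).1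
        (by rw [hR.eq]) (absM_psd_sq R).2
    rw [← hR2, hTr] at h
    simp at h
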